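/- If X is a subspace of a countably compact Hausdorff space Y and X is first-countable at a point x ∈ X, then X is regular at x, i.e., every neighborhood of x in X contains a closed (in X) neighborhood of x. -/

import Mathlib

open Filter Topology

/-- If `X` is a subspace of a countably compact Hausdorff space `Y` and `X` is
first-countable at a point `x ∈ X`, then `X` is regular at `x`: every
neighborhood of `x` in `X` contains a closed (in `X`) neighborhood of `x`. -/
theorem stmt0 {Y : Type*} [TopologicalSpace Y] [T2Space Y]
    (hcc : ∀ S : Set Y, S.Infinite → ∃ y : Y, AccPt y (𝓟 S))
    (s : Set Y) (x : s) (hfc : (𝓝 x).IsCountablyGenerated) :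
    ∀ U ∈ 𝓝 x, ∃ C ∈ 𝓝 x, IsClosed C ∧ C ⊆ U := by
  intro U hU
  obtain ⟨V, hV⟩ := (𝓝 x).exists_antitone_basis
  by_contra hcon
  push_neg at hcon
  have h1 : ∀ n, ∃ a : s, a ∈ closure (V n) ∧ a ∉ U := by
    intro n
    have hc : closure (V n) ∈ 𝓝 x := mem_of_superset (hV.mem n) subset_closure
    obtain ⟨a, ha, haU⟩ := Set.not_subset.mp (hcon _ hc isClosed_closure)
    exact ⟨a, ha, haU⟩
  choose a ha haU using h1
  -- images in Y
  have key : ∀ n, (a n : Y) ∈ closure ((↑) '' V n : Set Y) := by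
    intro n
    exact (image_closure_subset_closure_image continuous_subtype_val)
      ⟨a n, ha n, rfl⟩
  have hmono : ∀ m n, m ≤ n → (a n : Y) ∈ closure ((↑) '' V m : Set Y) := by
    intro m n h
    exact closure_mono (Set.image_mono (hV.antitone h)) (key n)
  -- any point in all the closures equals x
  have hstar : ∀ y : Y, (∀ n, y ∈ closure ((↑) '' V n : Set Y)) → y = (x : Y) := by
    intro y hy
    by_contra hne
    obtain ⟨Wy, Wx, oWy, oWx, hyW, hxW, hdis⟩ := t2_separation hne
    have hpre : (↑) ⁻¹' Wx ∈ 𝓝 x := by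
      rw [nhds_subtype]
      exact preimage_mem_comap (oWx.mem_nhds hxW)
    obtain ⟨n, -, hn⟩ := hV.toHasBasis.mem_iff.mp hpre
    have himg : ((↑) '' V n : Set Y) ⊆ Wx := by
      rintro _ ⟨z, hz, rfl⟩; exact hn hz
    have hyWx : y ∈ closure Wx := closure_mono himg (hy n)
    have : (Wy ∩ Wx).Nonempty := by
      rcases mem_closure_iff.mp hyWx Wy oWy hyW with ⟨z, hz⟩
      exact ⟨z, hz⟩
    exact this.not_disjoint hdis
  -- extract a Y-neighborhood of x whose preimage is inside U
  obtain ⟨W, hW, hWU⟩ : ∃ W ∈ 𝓝 (x : Y), (↑) ⁻¹' W ⊆ U := by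
    rw [nhds_subtype] at hU
    exact hU
  set A : Set Y := Set.range fun n => (a n : Y) with hA
  by_cases hAinf : A.Infinite
  · obtain ⟨y, hy⟩ := hcc A hAinf
    -- y is in the closure of every tail
    have htail : ∀ m, y ∈ closure ((fun n => (a n : Y)) '' Set.Ici m) := by
      intro m
      rw [mem_closure_iff]
      intro O hO hyO
      set F : Set Y := ((fun n => (a n : Y)) '' Set.Iio m) \ {y} with hF
      have hFfin : F.Finite := ((Set.finite_Iio m).image _).diff
      have hO' : O \ F ∈ 𝓝 y := by
        have : IsOpen (O \ F) := hO.sdiff hFfin.isClosed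
        exact this.mem_nhds ⟨hyO, fun hf => hf.2 rfl⟩
      obtain ⟨z, ⟨hzO, hzA⟩, hzy⟩ := accPt_iff_nhds.mp hy _ hO'
      obtain ⟨n, rfl⟩ := hzA
      rcases lt_or_ge n m with h | h
      · exact absurd ⟨⟨n, h, rfl⟩, fun h' => hzy h'⟩ hzO.2
      · exact ⟨_, hzO.1, n, h, rfl⟩
    have hyx : y = (x : Y) := by
      refine hstar y fun m => ?_
      refine closure_minimal ?_ isClosed_closure (htail m)
      rintro _ ⟨n, hn, rfl⟩
      exact hmono m n hn
    subst hyx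
    obtain ⟨z, ⟨hzW, hzA⟩, -⟩ := accPt_iff_nhds.mp hy W hW
    obtain ⟨n, rfl⟩ := hzA
    exact haU n (hWU hzW)
  · rw [Set.not_infinite] at hAinf
    obtain ⟨y, hfib'⟩ : ∃ y, {n | (a n : Y) = y}.Infinite := by
      by_contra hno
      push_neg at hno
      have huniv : (Set.univ : Set ℕ) ⊆ ⋃ y ∈ A, {n | (a n : Y) = y} := by
        intro n _
        exact Set.mem_biUnion (Set.mem_range_self n) rfl
      exact Set.infinite_univ
        (Set.Finite.subset (Set.Finite.biUnion hAinf fun y _ => hno y) huniv)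
    have hyall : ∀ m, y ∈ closure ((↑) '' V m : Set Y) := by
      intro m
      obtain ⟨n, hn, hlt⟩ := hfib'.exists_gt m
      rw [← hn]
      exact hmono m n hlt.le
    have hyx := hstar y hyall
    obtain ⟨n, hn, -⟩ := hfib'.exists_gt 0
    have : a n = x := Subtype.ext (hn.trans hyx)
    exact haU n (this ▸ mem_of_mem_nhds hU)
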